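/- For every γ > 0, (1/(4·√(2π)))·∫_0^∞ (1 − e^{−γ·τ})·e^{−τ/4}·(1 − e^{−τ/2})^{-3/2} dτ = 2^{-1/2}·Γ(2γ + 1/2)/Γ(2γ), where Γ is the Gamma function. -/

import Mathlib

open Real MeasureTheory

/-- The Lévy jump rate density of the inverse local time at zero of the
Ornstein–Uhlenbeck process. -/
noncomputable def Rrate (τ : ℝ) : ℝ :=
  (1 / (4 * Real.sqrt (2 * Real.pi))) * Real.exp (-τ/4) * (1 - Real.exp (-τ/2)) ^ (-(3:ℝ)/2)

open Set Filter Topology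

section aux

/-- Real Beta integral in terms of the Gamma function. -/
lemma realBeta_aux17 {a b : ℝ} (ha : 0 < a) (hb : 0 < b) :
    ∫ x in (0:ℝ)..1, x ^ (a-1) * (1-x) ^ (b-1) =
      Real.Gamma a * Real.Gamma b / Real.Gamma (a+b) := by
  have key := Complex.Gamma_mul_Gamma_eq_betaIntegral (s := (a:ℂ)) (t := (b:ℂ))
    (by simpa using ha) (by simpa using hb)
  have hβ : Complex.betaIntegral (a:ℂ) (b:ℂ) =
      ((∫ x in (0:ℝ)..1, x ^ (a-1) * (1-x) ^ (b-1) : ℝ) : ℂ) := by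
    rw [Complex.betaIntegral, ← intervalIntegral.integral_ofReal]
    apply intervalIntegral.integral_congr
    intro x hx
    rw [Set.uIcc_of_le (by norm_num : (0:ℝ) ≤ 1)] at hx
    obtain ⟨h0, h1⟩ := hx
    simp only [Complex.ofReal_mul, Complex.ofReal_cpow h0,
      Complex.ofReal_cpow (by linarith : (0:ℝ) ≤ 1 - x)]
    push_cast
    ring
  rw [hβ, ← Complex.ofReal_add, Complex.Gamma_ofReal, Complex.Gamma_ofReal,
    Complex.Gamma_ofReal, ← Complex.ofReal_mul, ← Complex.ofReal_mul] at key
  have := Complex.ofReal_injective key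
  have hG : Real.Gamma (a+b) ≠ 0 := (Real.Gamma_pos_of_pos (by linarith)).ne'
  field_simp
  linarith [this]

/-- `1 - u^s ≤ max 1 s * (1-u)` for `0 < u ≤ 1`, `0 < s`. -/
lemma pow_gap_bound17 {s u : ℝ} (hu0 : 0 < u) (hu1 : u ≤ 1) :
    1 - u ^ s ≤ max 1 s * (1 - u) := by
  rcases le_total s 1 with h | h
  · have : u ≤ u ^ s := by
      calc u = u ^ (1:ℝ) := (Real.rpow_one u).symm
      _ ≤ u ^ s := Real.rpow_le_rpow_of_exponent_ge hu0 hu1 h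
    nlinarith [le_max_left (1:ℝ) s, sub_nonneg.mpr hu1]
  · have hmax : max 1 s = s := max_eq_right h
    have hb := one_add_mul_self_le_rpow_one_add (s := u - 1) (by linarith) h
    rw [show (1 : ℝ) + (u - 1) = u by ring] at hb
    rw [hmax]; nlinarith

/-- Lower bound `1 - exp (-x) ≥ x / (1 + x)` for `x ≥ 0`. -/
lemma one_sub_exp_neg_ge17 {x : ℝ} (hx : 0 ≤ x) : x / (1 + x) ≤ 1 - Real.exp (-x) := by
  have h := Real.add_one_le_exp x
  have hexp : Real.exp (-x) = (Real.exp x)⁻¹ := Real.exp_neg x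
  have hpos : (0:ℝ) < Real.exp x := Real.exp_pos x
  rw [hexp, div_le_iff₀ (by linarith)]
  have : (1 - (Real.exp x)⁻¹) * (1 + x) = 1 + x - (1 + x) / Real.exp x := by
    field_simp
  rw [this]
  have h2 : (1 + x) / Real.exp x ≤ 1 := by
    rw [div_le_one hpos]; linarith
  linarith

/-- For `0 < τ ≤ 1` one has `(1 - exp (-τ/2)) ^ (-(1:ℝ)/2) ≤ √3 * τ ^ (-(1:ℝ)/2)`. -/
lemma rpow_bound17 {τ : ℝ} (h0 : 0 < τ) (h1 : τ ≤ 1) :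
    (1 - Real.exp (-τ/2)) ^ (-(1:ℝ)/2) ≤ Real.sqrt 3 * τ ^ (-(1:ℝ)/2) := by
  have hb : τ / 3 ≤ 1 - Real.exp (-τ/2) := by
    have := one_sub_exp_neg_ge17 (x := τ/2) (by linarith)
    have h2 : τ/2 / (1 + τ/2) ≥ τ/3 := by
      rw [ge_iff_le, div_le_div_iff₀ (by norm_num) (by linarith)]
      nlinarith
    rw [show -τ/2 = -(τ/2) by ring]; linarith
  have hτ3 : (0:ℝ) < τ / 3 := by linarith
  have hrb : (1 - Real.exp (-τ/2)) ^ (-(1:ℝ)/2) ≤ (τ/3) ^ (-(1:ℝ)/2) :=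
    Real.rpow_le_rpow_of_nonpos hτ3 hb (by norm_num)
  have hτ3' : (τ/3) ^ (-(1:ℝ)/2) = Real.sqrt 3 * τ ^ (-(1:ℝ)/2) := by
    have h3 : (3:ℝ) ^ (-(1:ℝ)/2) = (Real.sqrt 3)⁻¹ := by
      rw [show (-(1:ℝ)/2) = -(1/2) by norm_num, Real.rpow_neg (by norm_num),
        ← Real.sqrt_eq_rpow]
    rw [Real.div_rpow h0.le (by norm_num), h3]
    field_simp
  linarith

lemma one_sub_exp_pos17 {τ : ℝ} (hτ : 0 < τ) : 0 < 1 - Real.exp (-τ/2) := by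
  have : Real.exp (-τ/2) < 1 := by
    rw [Real.exp_lt_one_iff]; linarith
  linarith

/-- Core integrability: `exp (-c * τ) * (1 - exp (-τ/2)) ^ (-(1:ℝ)/2)` on `Ioi 0`. -/
lemma intg_core17 {c : ℝ} (hc : 0 < c) :
    IntegrableOn (fun τ => Real.exp (-c * τ) * (1 - Real.exp (-τ/2)) ^ (-(1:ℝ)/2))
      (Ioi (0:ℝ)) := by
  have hmeas : AEStronglyMeasurable
      (fun τ => Real.exp (-c * τ) * (1 - Real.exp (-τ/2)) ^ (-(1:ℝ)/2))
      (volume.restrict (Ioi (0:ℝ))) := by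
    apply ContinuousOn.aestronglyMeasurable _ measurableSet_Ioi
    apply ContinuousOn.mul (Continuous.continuousOn (by continuity))
    apply ContinuousOn.rpow_const
    · exact Continuous.continuousOn (by continuity)
    · intro τ hτ
      exact Or.inl (one_sub_exp_pos17 hτ).ne'
  rw [show Ioi (0:ℝ) = Ioc 0 1 ∪ Ioi 1 by
    rw [Set.Ioc_union_Ioi_eq_Ioi]; norm_num]
  apply IntegrableOn.union
  · -- on (0,1]: dominate by √3 * τ^(-1/2)
    apply Integrable.mono' (g := fun τ => Real.sqrt 3 * τ ^ (-(1:ℝ)/2))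
    · apply Integrable.const_mul
      have := intervalIntegral.intervalIntegrable_rpow'
        (r := -(1:ℝ)/2) (a := 0) (b := 1) (by norm_num)
      rw [intervalIntegrable_iff_integrableOn_Ioc_of_le (by norm_num)] at this
      exact this
    · exact hmeas.mono_measure (Measure.restrict_mono (fun x hx => hx.1) le_rfl)
    · filter_upwards [ae_restrict_mem measurableSet_Ioc] with τ hτ
      obtain ⟨h0, h1⟩ := hτ
      rw [norm_mul, Real.norm_eq_abs, Real.norm_eq_abs,
        abs_of_pos (Real.exp_pos _),
        abs_of_nonneg (Real.rpow_nonneg (le_of_lt (one_sub_exp_pos17 h0)) _)]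
      calc Real.exp (-c * τ) * (1 - Real.exp (-τ/2)) ^ (-(1:ℝ)/2)
          ≤ 1 * (Real.sqrt 3 * τ ^ (-(1:ℝ)/2)) := by
            apply mul_le_mul _ (rpow_bound17 h0 h1)
              (Real.rpow_nonneg (le_of_lt (one_sub_exp_pos17 h0)) _) (by norm_num)
            rw [Real.exp_le_one_iff]; nlinarith
        _ = Real.sqrt 3 * τ ^ (-(1:ℝ)/2) := one_mul _
  · -- on (1,∞): dominate by C * exp(-c τ)
    apply Integrable.mono'
      (g := fun τ => (1 - Real.exp (-(1:ℝ)/2)) ^ (-(1:ℝ)/2) * Real.exp (-c * τ))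
    · exact (exp_neg_integrableOn_Ioi 1 hc).const_mul _
    · exact hmeas.mono_measure (Measure.restrict_mono (fun x hx => by
        simp at hx ⊢; linarith) le_rfl)
    · filter_upwards [ae_restrict_mem measurableSet_Ioi] with τ hτ
      simp only [mem_Ioi] at hτ
      have h0 : (0:ℝ) < τ := by linarith
      have hb1 : (0:ℝ) < 1 - Real.exp (-(1:ℝ)/2) := by
        have : Real.exp (-(1:ℝ)/2) < 1 := by rw [Real.exp_lt_one_iff]; norm_num
        linarith
      have hmono : 1 - Real.exp (-(1:ℝ)/2) ≤ 1 - Real.exp (-τ/2) := by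
        have : Real.exp (-τ/2) ≤ Real.exp (-(1:ℝ)/2) := by
          apply Real.exp_le_exp.mpr; linarith
        linarith
      have hrb : (1 - Real.exp (-τ/2)) ^ (-(1:ℝ)/2)
          ≤ (1 - Real.exp (-(1:ℝ)/2)) ^ (-(1:ℝ)/2) :=
        Real.rpow_le_rpow_of_nonpos hb1 hmono (by norm_num)
      rw [norm_mul, Real.norm_eq_abs, Real.norm_eq_abs,
        abs_of_pos (Real.exp_pos _),
        abs_of_nonneg (Real.rpow_nonneg (le_of_lt (one_sub_exp_pos17 h0)) _), mul_comm]
      exact mul_le_mul_of_nonneg_right hrb (le_of_lt (Real.exp_pos _))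

/-- Derivative of the key auxiliary function. -/
lemma hasDerivAt_H17 {γ : ℝ} {τ : ℝ} (hτ : 0 < τ) :
    HasDerivAt
      (fun t => Real.exp (-t/4) * (1 - Real.exp (-γ*t)) * (1 - Real.exp (-t/2)) ^ (-(1:ℝ)/2))
      (-(1/4) * (Real.exp (-τ/4) * (1 - Real.exp (-γ*τ)) * (1 - Real.exp (-τ/2)) ^ (-(3:ℝ)/2))
        + γ * (Real.exp (-(γ+1/4)*τ) * (1 - Real.exp (-τ/2)) ^ (-(1:ℝ)/2))) τ := by
  have hne : (1 : ℝ) - Real.exp (-τ/2) ≠ 0 := (one_sub_exp_pos17 hτ).ne'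
  have hA : HasDerivAt (fun t : ℝ => Real.exp (-t/4)) (Real.exp (-τ/4) * (-1/4)) τ :=
    ((hasDerivAt_id τ).neg.div_const 4).exp
  have hB : HasDerivAt (fun t : ℝ => 1 - Real.exp (-γ*t))
      (-(Real.exp (-γ*τ) * (-γ * 1))) τ :=
    (((hasDerivAt_id τ).const_mul (-γ)).exp).const_sub 1
  have hg : HasDerivAt (fun t : ℝ => 1 - Real.exp (-t/2))
      (-(Real.exp (-τ/2) * (-1/2))) τ :=
    (((hasDerivAt_id τ).neg.div_const 2).exp).const_sub 1
  have hC : HasDerivAt (fun t : ℝ => (1 - Real.exp (-t/2)) ^ (-(1:ℝ)/2))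
      (-(Real.exp (-τ/2) * (-1/2)) * (-(1:ℝ)/2)
        * (1 - Real.exp (-τ/2)) ^ (-(1:ℝ)/2 - 1)) τ :=
    hg.rpow_const (Or.inl hne)
  have h := (hA.mul hB).mul hC
  refine h.congr_deriv ?_
  have he1 : (-(1:ℝ)/2 - 1) = -(3:ℝ)/2 := by norm_num
  have hsplit : (1 - Real.exp (-τ/2)) ^ (-(1:ℝ)/2)
      = (1 - Real.exp (-τ/2)) ^ (-(3:ℝ)/2) * (1 - Real.exp (-τ/2)) := by
    rw [show (-(1:ℝ)/2) = (-(3:ℝ)/2) + 1 by norm_num, Real.rpow_add_one hne]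
  have hexp1 : Real.exp (-(γ+1/4)*τ) = Real.exp (-γ*τ) * Real.exp (-τ/4) := by
    rw [← Real.exp_add]; ring_nf
  simp only [Pi.mul_apply]
  rw [he1, hsplit, hexp1]
  ring

end aux

set_option maxHeartbeats 1000000 in
theorem stmt17 :
    ∀ γ > (0:ℝ),
      (∫ τ in Set.Ioi (0:ℝ), (1 - Real.exp (-γ * τ)) * Rrate τ) =
        2 ^ (-(1:ℝ)/2) * Real.Gamma (2 * γ + 1/2) / Real.Gamma (2 * γ) := by
  intro γ hγ
  set f : ℝ → ℝ := fun τ =>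
    Real.exp (-τ/4) * (1 - Real.exp (-γ*τ)) * (1 - Real.exp (-τ/2)) ^ (-(3:ℝ)/2) with hf_def
  set h : ℝ → ℝ := fun τ =>
    Real.exp (-(γ+1/4)*τ) * (1 - Real.exp (-τ/2)) ^ (-(1:ℝ)/2) with hh_def
  set H : ℝ → ℝ := fun t =>
    Real.exp (-t/4) * (1 - Real.exp (-γ*t)) * (1 - Real.exp (-t/2)) ^ (-(1:ℝ)/2) with hH_def
  -- integrability of h
  have hInt_h : IntegrableOn h (Ioi (0:ℝ)) := intg_core17 (by linarith)
  -- integrability of f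
  have hInt_f : IntegrableOn f (Ioi (0:ℝ)) := by
    apply Integrable.mono'
      (g := fun τ => max 1 (2*γ) *
        (Real.exp (-((1:ℝ)/4) * τ) * (1 - Real.exp (-τ/2)) ^ (-(1:ℝ)/2)))
    · exact (intg_core17 (by norm_num)).const_mul _
    · apply ContinuousOn.aestronglyMeasurable _ measurableSet_Ioi
      apply ContinuousOn.mul (Continuous.continuousOn (by continuity))
      apply ContinuousOn.rpow_const (Continuous.continuousOn (by continuity))
      intro τ hτ
      exact Or.inl (one_sub_exp_pos17 hτ).ne'
    · filter_upwards [ae_restrict_mem measurableSet_Ioi] with τ hτ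
      simp only [mem_Ioi] at hτ
      have hu0 : (0:ℝ) < Real.exp (-τ/2) := Real.exp_pos _
      have hu1 : Real.exp (-τ/2) ≤ 1 := by
        rw [Real.exp_le_one_iff]; linarith
      have hpos := one_sub_exp_pos17 hτ
      have hgap : 1 - Real.exp (-γ*τ) ≤ max 1 (2*γ) * (1 - Real.exp (-τ/2)) := by
        have := pow_gap_bound17 (s := 2*γ) hu0 hu1
        rwa [← Real.exp_mul, show -τ/2 * (2*γ) = -γ*τ by ring] at this
      have hBnn : 0 ≤ 1 - Real.exp (-γ*τ) := by
        have : Real.exp (-γ*τ) ≤ 1 := by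
          rw [Real.exp_le_one_iff]; nlinarith
        linarith
      have hsplit : (1 - Real.exp (-τ/2)) ^ (-(1:ℝ)/2)
          = (1 - Real.exp (-τ/2)) ^ (-(3:ℝ)/2) * (1 - Real.exp (-τ/2)) := by
        rw [show (-(1:ℝ)/2) = (-(3:ℝ)/2) + 1 by norm_num, Real.rpow_add_one hpos.ne']
      rw [Real.norm_eq_abs, abs_of_nonneg (by positivity)]
      calc f τ ≤ Real.exp (-τ/4) * (max 1 (2*γ) * (1 - Real.exp (-τ/2)))
            * (1 - Real.exp (-τ/2)) ^ (-(3:ℝ)/2) := by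
            apply mul_le_mul_of_nonneg_right _ (by positivity)
            exact mul_le_mul_of_nonneg_left hgap (le_of_lt (Real.exp_pos _))
        _ = max 1 (2*γ) *
            (Real.exp (-((1:ℝ)/4) * τ) * (1 - Real.exp (-τ/2)) ^ (-(1:ℝ)/2)) := by
            rw [hsplit, show -((1:ℝ)/4) * τ = -τ/4 by ring]
            ring
  -- FTC: the integral of H' over (0,∞) vanishes
  have hH0 : H 0 = 0 := by simp [hH_def]
  have hlim : Tendsto H atTop (𝓝 0) := by
    apply squeeze_zero' (g := fun t => (1 - Real.exp (-(1:ℝ)/2)) ^ (-(1:ℝ)/2)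
      * Real.exp (-t/4))
    · filter_upwards [Ioi_mem_atTop (0:ℝ)] with t ht
      simp only [mem_Ioi] at ht
      have h1 : Real.exp (-γ*t) ≤ 1 := by
        rw [Real.exp_le_one_iff]; nlinarith
      have := one_sub_exp_pos17 ht
      have h2 : (0:ℝ) ≤ (1 - Real.exp (-t/2)) ^ (-(1:ℝ)/2) :=
        Real.rpow_nonneg (by linarith) _
      simp only [hH_def]
      exact mul_nonneg (mul_nonneg (Real.exp_pos _).le (by linarith)) h2
    · filter_upwards [Ioi_mem_atTop (1:ℝ)] with t ht
      simp only [mem_Ioi] at ht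
      have h0 : (0:ℝ) < t := by linarith
      have hb1 : (0:ℝ) < 1 - Real.exp (-(1:ℝ)/2) := by
        have : Real.exp (-(1:ℝ)/2) < 1 := by rw [Real.exp_lt_one_iff]; norm_num
        linarith
      have hmono : 1 - Real.exp (-(1:ℝ)/2) ≤ 1 - Real.exp (-t/2) := by
        have : Real.exp (-t/2) ≤ Real.exp (-(1:ℝ)/2) := by
          apply Real.exp_le_exp.mpr; linarith
        linarith
      have hrb : (1 - Real.exp (-t/2)) ^ (-(1:ℝ)/2)
          ≤ (1 - Real.exp (-(1:ℝ)/2)) ^ (-(1:ℝ)/2) :=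
        Real.rpow_le_rpow_of_nonpos hb1 hmono (by norm_num)
      have hB1 : 1 - Real.exp (-γ*t) ≤ 1 := by
        have := Real.exp_pos (-γ*t); linarith
      have hBnn : 0 ≤ 1 - Real.exp (-γ*t) := by
        have : Real.exp (-γ*t) ≤ 1 := by rw [Real.exp_le_one_iff]; nlinarith
        linarith
      simp only [hH_def]
      calc Real.exp (-t/4) * (1 - Real.exp (-γ*t)) * (1 - Real.exp (-t/2)) ^ (-(1:ℝ)/2)
          ≤ Real.exp (-t/4) * 1 * ((1 - Real.exp (-(1:ℝ)/2)) ^ (-(1:ℝ)/2)) := by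
            apply mul_le_mul _ hrb (Real.rpow_nonneg (le_of_lt (one_sub_exp_pos17 h0)) _)
              (by positivity)
            nlinarith [Real.exp_pos (-t/4)]
        _ = (1 - Real.exp (-(1:ℝ)/2)) ^ (-(1:ℝ)/2) * Real.exp (-t/4) := by ring
    · rw [show (0:ℝ) = (1 - Real.exp (-(1:ℝ)/2)) ^ (-(1:ℝ)/2) * 0 by ring]
      apply Tendsto.const_mul
      exact Real.tendsto_exp_atBot.comp (by
        apply Filter.tendsto_atBot_mono (fun t : ℝ => le_refl (-t/4)) ?_
        have : Tendsto (fun t : ℝ => -t/4) atTop atBot := by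
          apply Tendsto.atBot_div_const (by norm_num)
          exact tendsto_neg_atBot_iff.mpr tendsto_id
        exact this)
  have hcont : ContinuousWithinAt H (Ici 0) 0 := by
    rw [ContinuousWithinAt, hH0]
    apply squeeze_zero' (g := fun t => γ * Real.sqrt 3 * Real.sqrt t)
    · filter_upwards [self_mem_nhdsWithin] with t ht
      simp only [mem_Ici] at ht
      have h1 : Real.exp (-γ*t) ≤ 1 := by rw [Real.exp_le_one_iff]; nlinarith
      have h2 : (0:ℝ) ≤ 1 - Real.exp (-t/2) := by
        have : Real.exp (-t/2) ≤ 1 := by rw [Real.exp_le_one_iff]; linarith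
        linarith
      have h3 : (0:ℝ) ≤ (1 - Real.exp (-t/2)) ^ (-(1:ℝ)/2) := Real.rpow_nonneg h2 _
      simp only [hH_def]
      exact mul_nonneg (mul_nonneg (Real.exp_pos _).le (by linarith)) h3
    · filter_upwards [Icc_mem_nhdsGE_of_mem (Set.mem_Ico.mpr ⟨le_refl 0, zero_lt_one⟩)]
        with t ht
      obtain ⟨ht0, ht1⟩ := ht
      rcases eq_or_lt_of_le ht0 with rfl | ht0'
      · simp [hH_def]
      · have hBle : 1 - Real.exp (-γ*t) ≤ γ * t := by
          have := Real.add_one_le_exp (-γ*t)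
          nlinarith
        have hC := rpow_bound17 ht0' ht1
        have hE : Real.exp (-t/4) ≤ 1 := by
          rw [Real.exp_le_one_iff]; linarith
        have hBnn : 0 ≤ 1 - Real.exp (-γ*t) := by
          have : Real.exp (-γ*t) ≤ 1 := by rw [Real.exp_le_one_iff]; nlinarith
          linarith
        have hCnn : (0:ℝ) ≤ (1 - Real.exp (-t/2)) ^ (-(1:ℝ)/2) :=
          Real.rpow_nonneg (le_of_lt (one_sub_exp_pos17 ht0')) _
        have hkey : H t ≤ (γ * t) * (Real.sqrt 3 * t ^ (-(1:ℝ)/2)) := by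
          simp only [hH_def]
          calc Real.exp (-t/4) * (1 - Real.exp (-γ*t)) * (1 - Real.exp (-t/2)) ^ (-(1:ℝ)/2)
              ≤ 1 * (γ * t) * (Real.sqrt 3 * t ^ (-(1:ℝ)/2)) := by
                apply mul_le_mul _ hC hCnn (by positivity)
                rw [one_mul]
                calc Real.exp (-t/4) * (1 - Real.exp (-γ*t)) ≤ 1 * (γ * t) :=
                  mul_le_mul hE hBle hBnn (by norm_num)
                _ = γ * t := one_mul _
            _ = (γ * t) * (Real.sqrt 3 * t ^ (-(1:ℝ)/2)) := by ring
        have hrt : t * t ^ (-(1:ℝ)/2) = Real.sqrt t := by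
          rw [show (-(1:ℝ)/2) = -(1/2) by norm_num, Real.rpow_neg ht0'.le,
            ← Real.sqrt_eq_rpow, ← div_eq_mul_inv, Real.div_sqrt]
        calc H t ≤ (γ * t) * (Real.sqrt 3 * t ^ (-(1:ℝ)/2)) := hkey
          _ = γ * Real.sqrt 3 * (t * t ^ (-(1:ℝ)/2)) := by ring
          _ = γ * Real.sqrt 3 * Real.sqrt t := by rw [hrt]
    · have h0 : Tendsto (fun t : ℝ => γ * Real.sqrt 3 * Real.sqrt t) (𝓝 0)
          (𝓝 (γ * Real.sqrt 3 * Real.sqrt 0)) :=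
        (continuous_const.mul Real.continuous_sqrt).tendsto 0
      simpa using h0.mono_left nhdsWithin_le_nhds
  have hderiv : ∀ x ∈ Ioi (0:ℝ), HasDerivAt H (-(1/4) * f x + γ * h x) x := by
    intro x hx
    exact hasDerivAt_H17 hx
  have hintH' : IntegrableOn (fun x => -(1/4) * f x + γ * h x) (Ioi (0:ℝ)) :=
    (hInt_f.const_mul _).add (hInt_h.const_mul _)
  have hFTC : ∫ τ in Ioi (0:ℝ), (-(1/4) * f τ + γ * h τ) = 0 := by
    rw [integral_Ioi_of_hasDerivAt_of_tendsto hcont hderiv hintH' hlim, hH0, sub_zero]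
  have hlin : ∫ τ in Ioi (0:ℝ), (-(1/4) * f τ + γ * h τ)
      = -(1/4) * (∫ τ in Ioi (0:ℝ), f τ) + γ * (∫ τ in Ioi (0:ℝ), h τ) := by
    rw [integral_add (hInt_f.const_mul _) (hInt_h.const_mul _),
      integral_const_mul, integral_const_mul]
  have hf_eq : (∫ τ in Ioi (0:ℝ), f τ) = 4 * γ * (∫ τ in Ioi (0:ℝ), h τ) := by
    rw [hlin] at hFTC; linarith
  -- change of variables for ∫ h
  have hCoV : (∫ τ in Ioi (0:ℝ), h τ)
      = 2 * ∫ x in (0:ℝ)..1, x ^ (2*γ+1/2-1) * (1-x) ^ ((1/2:ℝ)-1) := by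
    set g : ℝ → ℝ := fun x => x ^ (2*γ+1/2-1) * (1-x) ^ ((1/2:ℝ)-1) with hg_def
    have himg : (fun τ : ℝ => Real.exp (-τ/2)) '' Ioi 0 = Ioo 0 1 := by
      ext u
      constructor
      · rintro ⟨τ, hτ, rfl⟩
        simp only [mem_Ioi] at hτ
        exact ⟨Real.exp_pos _, by rw [Real.exp_lt_one_iff]; linarith⟩
      · rintro ⟨hu0, hu1⟩
        refine ⟨-2 * Real.log u, ?_, ?_⟩
        · simp only [mem_Ioi]
          have := Real.log_neg hu0 hu1
          linarith
        · show Real.exp (-(-2 * Real.log u)/2) = u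
          rw [show -(-2 * Real.log u)/2 = Real.log u by ring, Real.exp_log hu0]
    have hder : ∀ x : ℝ, HasDerivAt (fun τ : ℝ => Real.exp (-τ/2))
        (Real.exp (-x/2) * (-1/2)) x :=
      fun x => ((hasDerivAt_id x).neg.div_const 2).exp
    have hinj : Set.InjOn (fun τ : ℝ => Real.exp (-τ/2)) (Ioi 0) := by
      intro a _ b _ hab
      have := Real.exp_injective hab
      linarith
    have hchg := integral_image_eq_integral_abs_deriv_smul (f' := fun τ : ℝ =>
        Real.exp (-τ/2) * (-1/2)) measurableSet_Ioi
      (fun x _ => (hder x).hasDerivWithinAt) hinj g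
    rw [himg] at hchg
    have hIoo : (∫ x in (0:ℝ)..1, g x) = ∫ x in Ioo (0:ℝ) 1, g x := by
      rw [intervalIntegral.integral_of_le (by norm_num), integral_Ioc_eq_integral_Ioo]
    have hpt : (∫ x in Ioi (0:ℝ), |Real.exp (-x/2) * (-1/2)| • g (Real.exp (-x/2)))
        = ∫ τ in Ioi (0:ℝ), (1/2) * h τ := by
      apply setIntegral_congr_fun measurableSet_Ioi
      intro τ hτ
      simp only [mem_Ioi] at hτ
      have habs : |Real.exp (-τ/2) * (-1/2)| = Real.exp (-τ/2) * (1/2) := by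
        rw [abs_mul, abs_of_pos (Real.exp_pos _)]
        norm_num
      have hrw1 : Real.exp (-τ/2) ^ (2*γ+1/2-1) = Real.exp (-τ/2 * (2*γ+1/2-1)) :=
        (Real.exp_mul _ _).symm
      have hrw2 : ((1/2:ℝ)-1) = -(1:ℝ)/2 := by norm_num
      simp only [smul_eq_mul, hg_def, hh_def, hrw1, hrw2, habs]
      rw [show Real.exp (-τ/2) * (1/2) * (Real.exp (-τ/2 * (2*γ+1/2-1))
          * (1 - Real.exp (-τ/2)) ^ (-(1:ℝ)/2))
        = (Real.exp (-τ/2) * Real.exp (-τ/2 * (2*γ+1/2-1)))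
          * (1 - Real.exp (-τ/2)) ^ (-(1:ℝ)/2) * (1/2) by ring, ← Real.exp_add]
      rw [show -τ/2 + -τ/2 * (2*γ+1/2-1) = -(γ+1/4)*τ by ring]
      ring
    rw [hIoo, hchg, hpt, integral_const_mul]
    ring
  -- evaluate the Beta integral
  have hBeta : (∫ x in (0:ℝ)..1, x ^ (2*γ+1/2-1) * (1-x) ^ ((1/2:ℝ)-1))
      = Real.Gamma (2*γ+1/2) * Real.Gamma (1/2) / Real.Gamma (2*γ+1/2+1/2) :=
    realBeta_aux17 (by linarith) (by norm_num)
  -- rewrite the LHS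
  have hLHS : (∫ τ in Set.Ioi (0:ℝ), (1 - Real.exp (-γ * τ)) * Rrate τ)
      = (1 / (4 * Real.sqrt (2 * Real.pi))) * ∫ τ in Ioi (0:ℝ), f τ := by
    rw [← integral_const_mul]
    apply setIntegral_congr_fun measurableSet_Ioi
    intro τ _
    simp only [Rrate, hf_def]
    ring
  rw [hLHS, hf_eq, hCoV, hBeta]
  -- final Gamma arithmetic
  have h2γ : (2*γ+1/2+1/2) = 2*γ + 1 := by ring
  rw [h2γ, Real.Gamma_add_one (by positivity : (2*γ:ℝ) ≠ 0), Real.Gamma_one_half_eq]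
  have hΓpos : 0 < Real.Gamma (2*γ) := Real.Gamma_pos_of_pos (by linarith)
  have hsqrt2π : Real.sqrt (2 * Real.pi) = Real.sqrt 2 * Real.sqrt Real.pi :=
    Real.sqrt_mul (by norm_num) _
  have h2pow : (2:ℝ) ^ (-(1:ℝ)/2) = (Real.sqrt 2)⁻¹ := by
    rw [show (-(1:ℝ)/2) = -(1/2) by norm_num, Real.rpow_neg (by norm_num),
      ← Real.sqrt_eq_rpow]
  rw [hsqrt2π, h2pow]
  have hπpos : (0:ℝ) < Real.sqrt Real.pi := Real.sqrt_pos.mpr Real.pi_pos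
  have h2pos : (0:ℝ) < Real.sqrt 2 := by positivity
  field_simp
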